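/- Let a₊, a₋ > 0 and γ ≤ -3. Then lim_{ρ → +∞} F₂(ρ) = +∞, where F₂(ρ) = ρ^{(γ-1)/(2(γ+1))} · I₁(ρ)/I₂(ρ) on ]a₋/a₊, +∞[. -/
import Mathlib

open Set MeasureTheory intervalIntegral Filter Topology

private lemma abs_rpow_II (a b : ℝ) :
    IntervalIntegrable (fun x : ℝ => |x| ^ (-(1 : ℝ) / 2)) volume a b := by
  suffices h : ∀ c : ℝ, 0 ≤ c →
      IntervalIntegrable (fun x : ℝ => |x| ^ (-(1 : ℝ) / 2)) volume 0 c by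
    have h' : ∀ c : ℝ, IntervalIntegrable (fun x : ℝ => |x| ^ (-(1 : ℝ) / 2)) volume 0 c := by
      intro c
      rcases le_total 0 c with hc | hc
      · exact h c hc
      · rw [IntervalIntegrable.iff_comp_neg]
        simpa [abs_neg] using h (-c) (by linarith)
    exact ((h' a).symm.trans (h' b))
  intro c hc
  have base : IntervalIntegrable (fun x : ℝ => x ^ (-(1 : ℝ) / 2)) volume 0 c :=
    intervalIntegrable_rpow' (by norm_num)
  rw [intervalIntegrable_iff] at base ⊢
  refine base.congr_fun ?_ measurableSet_uIoc
  intro x hx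
  rw [Set.uIoc_of_le hc] at hx
  simp [abs_of_pos hx.1]

private lemma abs_sub_rpow_II (A a b : ℝ) :
    IntervalIntegrable (fun x : ℝ => |x - A| ^ (-(1 : ℝ) / 2)) volume a b := by
  have := (abs_rpow_II (a - A) (b - A)).comp_sub_right A
  simpa using this

private lemma main_II (c d e : ℝ) (hc : c ≠ 0) (a b : ℝ)
    (hab : ∀ x ∈ Set.uIcc a b, 0 < x) :
    IntervalIntegrable (fun ξ : ℝ => |c * ξ + d| ^ (-(1 : ℝ) / 2) * |ξ| ^ e) volume a b := by
  obtain ⟨M, hM⟩ : ∃ M : ℝ, ∀ x ∈ Set.uIcc a b, |x| ^ e ≤ M := by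
    have hcont : ContinuousOn (fun x : ℝ => |x| ^ e) (Set.uIcc a b) :=
      (continuous_abs.continuousOn).rpow_const fun x hx =>
        Or.inl (abs_ne_zero.mpr (hab x hx).ne')
    obtain ⟨M, hM⟩ := isCompact_uIcc.exists_bound_of_continuousOn hcont
    exact ⟨M, fun x hx => (le_abs_self _).trans (by simpa [Real.norm_eq_abs] using hM x hx)⟩
  refine ((abs_sub_rpow_II (-d / c) a b).const_mul
    (|c| ^ (-(1 : ℝ) / 2) * M)).mono_fun' ?_ ?_
  · apply Measurable.aestronglyMeasurable
    fun_prop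
  · filter_upwards [MeasureTheory.ae_restrict_mem measurableSet_uIoc] with x hx
    have hx' : x ∈ Set.uIcc a b := Set.uIoc_subset_uIcc hx
    have hx0 : 0 < x := hab x hx'
    have key : |c * x + d| = |c| * |x - -d / c| := by
      rw [← abs_mul]
      congr 1
      field_simp
      ring
    have h1 : (0 : ℝ) ≤ |c * x + d| ^ (-(1 : ℝ) / 2) := Real.rpow_nonneg (abs_nonneg _) _
    rw [Real.norm_eq_abs, abs_of_nonneg (mul_nonneg h1 (Real.rpow_nonneg (abs_nonneg _) _))]
    calc |c * x + d| ^ (-(1 : ℝ) / 2) * |x| ^ e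
        ≤ |c * x + d| ^ (-(1 : ℝ) / 2) * M := by
          exact mul_le_mul_of_nonneg_left (hM x hx') h1
      _ = |c| ^ (-(1 : ℝ) / 2) * M * |x - -d / c| ^ (-(1 : ℝ) / 2) := by
          rw [key, Real.mul_rpow (abs_nonneg _) (abs_nonneg _)]; ring

/-- for `γ ≤ -3`, `F₂(ρ) → +∞` as `ρ → +∞`. -/
theorem stmt_7 (ap am γ : ℝ) (hap : 0 < ap) (ham : 0 < am) (hγ : γ ≤ -3)
    (I₁ I₂ F₂ : ℝ → ℝ)
    (hI₁ : ∀ ρ : ℝ, I₁ ρ =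
      ∫ ξ in (ap * (ρ + 1) / (ap + am))..1,
        |ap - ap * ξ| ^ (-(1 : ℝ) / 2) * |ξ| ^ (-(γ / (γ + 1))))
    (hI₂ : ∀ ρ : ℝ, I₂ ρ =
      ∫ ξ in (ap / am)..(ap / (ap + am) * ((ρ + 1) / ρ)),
        |am * ξ - ap| ^ (-(1 : ℝ) / 2) * |ξ| ^ (-(γ / (γ + 1))))
    (hF₂ : ∀ ρ : ℝ, F₂ ρ = ρ ^ ((γ - 1) / (2 * (γ + 1))) * (I₁ ρ / I₂ ρ)) :
    Tendsto F₂ atTop atTop := by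
  have hamap : (0 : ℝ) < ap + am := by linarith
  set e : ℝ := -(γ / (γ + 1)) with he
  set p : ℝ := (γ - 1) / (2 * (γ + 1)) with hpdef
  have hp : 0 < p := div_pos_of_neg_of_neg (by linarith) (by linarith)
  set f₁ : ℝ → ℝ := fun ξ => |(-ap) * ξ + ap| ^ (-(1 : ℝ) / 2) * |ξ| ^ e with hf₁
  set f₂ : ℝ → ℝ := fun ξ => |am * ξ + (-ap)| ^ (-(1 : ℝ) / 2) * |ξ| ^ e with hf₂
  have hf₁nonneg : ∀ ξ, 0 ≤ f₁ ξ := fun ξ =>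
    mul_nonneg (Real.rpow_nonneg (abs_nonneg _) _) (Real.rpow_nonneg (abs_nonneg _) _)
  have hf₂nonneg : ∀ ξ, 0 ≤ f₂ ξ := fun ξ =>
    mul_nonneg (Real.rpow_nonneg (abs_nonneg _) _) (Real.rpow_nonneg (abs_nonneg _) _)
  have hI₁' : ∀ ρ : ℝ, I₁ ρ = ∫ ξ in (ap * (ρ + 1) / (ap + am))..1, f₁ ξ := by
    intro ρ; rw [hI₁]
    apply intervalIntegral.integral_congr
    intro ξ _
    simp only [hf₁]
    rw [show ap - ap * ξ = (-ap) * ξ + ap from by ring]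
  have hI₂' : ∀ ρ : ℝ, I₂ ρ = ∫ ξ in (ap / am)..(ap / (ap + am) * ((ρ + 1) / ρ)), f₂ ξ := by
    intro ρ; rw [hI₂]
    apply intervalIntegral.integral_congr
    intro ξ _
    simp only [hf₂]
    rw [show am * ξ - ap = am * ξ + (-ap) from by ring]
  set q : ℝ := ap / am with hq
  set binf : ℝ := ap / (ap + am) with hbinf
  have hb0 : 0 < binf := by positivity
  have hq0 : 0 < q := by positivity
  have hbq : binf < q := by
    rw [hbinf, hq, div_lt_div_iff₀ hamap ham]
    nlinarith
  -- integrability over positive intervals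
  have II₁ : ∀ a b : ℝ, (∀ x ∈ Set.uIcc a b, 0 < x) → IntervalIntegrable f₁ volume a b :=
    fun a b h => main_II (-ap) ap e (by simpa using hap.ne') a b h
  have II₂ : ∀ a b : ℝ, (∀ x ∈ Set.uIcc a b, 0 < x) → IntervalIntegrable f₂ volume a b :=
    fun a b h => main_II am (-ap) e ham.ne' a b h
  have II₁₂ : IntervalIntegrable f₁ volume 1 2 := by
    refine II₁ 1 2 fun x hx => ?_
    rw [Set.uIcc_of_le (by norm_num : (1:ℝ) ≤ 2)] at hx
    linarith [hx.1]
  have IIf₂ : IntervalIntegrable f₂ volume binf q := by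
    refine II₂ binf q fun x hx => ?_
    rw [Set.uIcc_of_le hbq.le] at hx
    linarith [hx.1]
  set c₁ : ℝ := ∫ ξ in (1:ℝ)..2, f₁ ξ with hc₁def
  set C₂ : ℝ := ∫ ξ in binf..q, f₂ ξ with hC₂def
  have hc₁ : 0 < c₁ := by
    refine intervalIntegral.intervalIntegral_pos_of_pos_on II₁₂ ?_ one_lt_two
    intro ξ hξ
    have h1 : (-ap) * ξ + ap ≠ 0 := by nlinarith [hξ.1]
    exact mul_pos (Real.rpow_pos_of_pos (abs_pos.mpr h1) _)
      (Real.rpow_pos_of_pos (abs_pos.mpr (by nlinarith [hξ.1] : ξ ≠ 0)) _)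
  have hC₂ : 0 < C₂ := by
    refine intervalIntegral.intervalIntegral_pos_of_pos_on IIf₂ ?_ hbq
    intro ξ hξ
    have hξ0 : 0 < ξ := lt_trans hb0 hξ.1
    have h1 : am * ξ + (-ap) ≠ 0 := by
      have h := (lt_div_iff₀ ham).mp hξ.2
      nlinarith
    exact mul_pos (Real.rpow_pos_of_pos (abs_pos.mpr h1) _)
      (Real.rpow_pos_of_pos (abs_pos.mpr hξ0.ne') _)
  -- eventual lower bound
  have hev : (fun ρ => c₁ / C₂ * ρ ^ p) ≤ᶠ[atTop] F₂ := by
    filter_upwards [eventually_ge_atTop (max (max 1 (2 * (ap + am) / ap)) (am / ap + 1))]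
      with ρ hρ
    have h1ρ : (1 : ℝ) ≤ ρ := le_trans (le_trans (le_max_left _ _) (le_max_left _ _)) hρ
    have hρ0 : 0 < ρ := by linarith
    have hX : 2 * (ap + am) / ap ≤ ρ :=
      le_trans (le_trans (le_max_right _ _) (le_max_left _ _)) hρ
    have hY : am / ap + 1 ≤ ρ := le_trans (le_max_right _ _) hρ
    have hXa : 2 * (ap + am) ≤ ρ * ap := (div_le_iff₀ hap).mp hX
    have hYa : am < ρ * ap := by
      have : am / ap < ρ := by linarith
      exact (div_lt_iff₀ hap).mp this
    set cρ : ℝ := ap * (ρ + 1) / (ap + am) with hcρ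
    have h2c : 2 ≤ cρ := by
      rw [hcρ, le_div_iff₀ hamap]
      nlinarith
    set bρ : ℝ := ap / (ap + am) * ((ρ + 1) / ρ) with hbρ
    have hb₁ : binf ≤ bρ := by
      rw [hbρ, ← hbinf]
      refine le_mul_of_one_le_right hb0.le ?_
      rw [le_div_iff₀ hρ0]
      linarith
    have hb₂ : bρ < q := by
      rw [hbρ, hq, div_mul_div_comm, div_lt_div_iff₀ (by positivity) ham]
      nlinarith
    -- integrability pieces
    have II₂c : IntervalIntegrable f₁ volume 2 cρ := by
      refine II₁ 2 cρ fun x hx => ?_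
      rw [Set.uIcc_of_le h2c] at hx
      linarith [hx.1]
    have hbρmem : bρ ∈ Set.uIcc binf q := by
      rw [Set.uIcc_of_le hbq.le]
      exact ⟨hb₁, hb₂.le⟩
    have IIa : IntervalIntegrable f₂ volume binf bρ :=
      IIf₂.mono_set (Set.uIcc_subset_uIcc Set.left_mem_uIcc hbρmem)
    have IIb : IntervalIntegrable f₂ volume bρ q :=
      IIf₂.mono_set (Set.uIcc_subset_uIcc hbρmem Set.right_mem_uIcc)
    -- bound on I₁
    have hI₁neg : I₁ ρ = -(∫ ξ in (1:ℝ)..cρ, f₁ ξ) := by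
      rw [hI₁' ρ, ← hcρ, intervalIntegral.integral_symm]
    have hsplit₁ : (∫ ξ in (1:ℝ)..cρ, f₁ ξ) = c₁ + ∫ ξ in (2:ℝ)..cρ, f₁ ξ :=
      (intervalIntegral.integral_add_adjacent_intervals II₁₂ II₂c).symm
    have htail : 0 ≤ ∫ ξ in (2:ℝ)..cρ, f₁ ξ :=
      intervalIntegral.integral_nonneg h2c fun x _ => hf₁nonneg x
    have hI₁lb : c₁ ≤ -(I₁ ρ) := by
      rw [hI₁neg, neg_neg, hsplit₁]
      linarith
    -- bounds on I₂
    have hI₂neg : I₂ ρ = -(∫ ξ in bρ..q, f₂ ξ) := by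
      rw [hI₂' ρ, ← hbρ]
      exact intervalIntegral.integral_symm _ _
    have hI₂pos : 0 < -(I₂ ρ) := by
      rw [hI₂neg, neg_neg]
      refine intervalIntegral.intervalIntegral_pos_of_pos_on IIb ?_ hb₂
      intro ξ hξ
      have hξ0 : 0 < ξ := lt_of_le_of_lt hb0.le (lt_of_le_of_lt hb₁ hξ.1)
      have h1 : am * ξ + (-ap) ≠ 0 := by
        have h := (lt_div_iff₀ ham).mp hξ.2
        nlinarith
      exact mul_pos (Real.rpow_pos_of_pos (abs_pos.mpr h1) _)
        (Real.rpow_pos_of_pos (abs_pos.mpr hξ0.ne') _)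
    have hI₂ub : -(I₂ ρ) ≤ C₂ := by
      have hsplit₂ : C₂ = (∫ ξ in binf..bρ, f₂ ξ) + ∫ ξ in bρ..q, f₂ ξ :=
        (intervalIntegral.integral_add_adjacent_intervals IIa IIb).symm
      have hfront : 0 ≤ ∫ ξ in binf..bρ, f₂ ξ :=
        intervalIntegral.integral_nonneg hb₁ fun x _ => hf₂nonneg x
      rw [hI₂neg, neg_neg, hsplit₂]
      linarith
    -- assemble
    have hrat : c₁ / C₂ ≤ I₁ ρ / I₂ ρ := by
      rw [show I₁ ρ / I₂ ρ = -I₁ ρ / -I₂ ρ from (neg_div_neg_eq _ _).symm]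
      exact div_le_div₀ (by linarith) hI₁lb hI₂pos hI₂ub
    rw [hF₂]
    calc c₁ / C₂ * ρ ^ p ≤ I₁ ρ / I₂ ρ * ρ ^ p :=
          mul_le_mul_of_nonneg_right hrat (Real.rpow_nonneg hρ0.le _)
      _ = ρ ^ p * (I₁ ρ / I₂ ρ) := mul_comm _ _
  exact tendsto_atTop_mono' atTop hev ((tendsto_rpow_atTop hp).const_mul_atTop
    (div_pos hc₁ hC₂))
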